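/- Let (R, m) be a Noetherian local ring. The ideal Z(R) of polynomials vanishing on R contains a regular polynomial if and only if R is a finite ring. -/

import Mathlib

open Polynomial IsLocalRing


private lemma finite_quot_pow {R : Type*} [CommRing R] [IsNoetherianRing R] (I : Ideal R)
    (hfin : Finite (R ⧸ I)) : ∀ n : ℕ, Finite (R ⧸ I ^ n) := by
  intro n
  induction n with
  | zero =>
    haveI : Subsingleton (R ⧸ (⊤ : Ideal R)) := Ideal.Quotient.subsingleton_iff.mpr rfl
    exact Finite.of_equiv (R ⧸ (⊤ : Ideal R))
      (Ideal.quotEquivOfEq (show I ^ 0 = ⊤ by simp)).symm.toEquiv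
  | succ j ih =>
    haveI := ih
    have hle : I ^ (j + 1) ≤ I ^ j := Ideal.pow_le_pow_right (Nat.le_succ j)
    set A := R ⧸ I ^ (j + 1) with hA
    let π : A →+* R ⧸ I ^ j := Ideal.Quotient.factor hle
    have hπs : Function.Surjective π := by
      intro b
      obtain ⟨y, rfl⟩ := Ideal.Quotient.mk_surjective b
      exact ⟨Ideal.Quotient.mk _ y, Ideal.Quotient.factor_mk _ _⟩
    let K : Ideal A := (I ^ j).map (Ideal.Quotient.mk (I ^ (j + 1)))
    let K' : Submodule R A := Submodule.restrictScalars R K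
    -- K' is finite
    have hfg : K'.FG := IsNoetherian.noetherian K'
    haveI hMF : Module.Finite R K' := Module.Finite.iff_fg.mpr hfg
    have hT : Module.IsTorsionBySet R K' (I : Set R) := by
      rintro ⟨x, hx⟩ ⟨a, ha⟩
      obtain ⟨y, hy, rfl⟩ := Ideal.mem_map_iff_of_surjective _ Ideal.Quotient.mk_surjective |>.mp hx
      apply Subtype.ext
      show a • (Ideal.Quotient.mk (I ^ (j + 1)) y) = 0
      have : a • (Ideal.Quotient.mk (I ^ (j + 1)) y) = Ideal.Quotient.mk (I ^ (j + 1)) (a * y) := by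
        rw [Algebra.smul_def, Ideal.Quotient.algebraMap_eq, ← map_mul]
      rw [this, Ideal.Quotient.eq_zero_iff_mem, pow_succ]
      exact mul_comm a y ▸ Ideal.mul_mem_mul hy ha
    letI : Module (R ⧸ I) K' := hT.module
    haveI : IsScalarTower R (R ⧸ I) K' := Module.IsTorsionBySet.isScalarTower hT
    haveI : Module.Finite (R ⧸ I) K' := Module.Finite.of_restrictScalars_finite R (R ⧸ I) K'
    haveI : Finite K' := Module.finite_of_finite (R ⧸ I)
    -- kernel description
    have hker : ∀ x : A, π x = 0 ↔ x ∈ K := by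
      intro x
      obtain ⟨y, rfl⟩ := Ideal.Quotient.mk_surjective x
      rw [Ideal.Quotient.factor_mk, Ideal.Quotient.eq_zero_iff_mem]
      constructor
      · intro hy
        exact Ideal.mem_map_of_mem _ hy
      · intro hy
        obtain ⟨z, hz, hzy⟩ := Ideal.mem_map_iff_of_surjective _ Ideal.Quotient.mk_surjective |>.mp hy
        have : y - z ∈ I ^ (j + 1) := by
          rw [← Ideal.Quotient.eq_zero_iff_mem, map_sub, hzy, sub_self]
        have h2 : y - z ∈ I ^ j := hle this
        simpa using add_mem h2 hz
    -- injection A ↪ K' × (R ⧸ I ^ j)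
    let s : (R ⧸ I ^ j) → A := Function.surjInv hπs
    have hs : ∀ b, π (s b) = b := fun b => Function.surjInv_eq hπs b
    let F : A → K' × (R ⧸ I ^ j) := fun x =>
      (⟨x - s (π x), (hker _).mp (by rw [map_sub, hs, sub_self])⟩, π x)
    have hF : Function.Injective F := by
      intro x y hxy
      have h2 : π x = π y := congrArg Prod.snd hxy
      have h1 : x - s (π x) = y - s (π y) := congrArg (fun p => (p.1 : A)) hxy
      rw [h2] at h1
      exact sub_left_inj.mp h1
    exact Finite.of_injective F hF


private lemma finite_of_regular_vanishing {R : Type*} [CommRing R] [IsNoetherianRing R]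
    (f : R[X]) (hf0 : ∀ r : R, f.eval r = 0) (hreg : f ∈ nonZeroDivisors R[X]) :
    Finite R := by
  set I : Ideal R := Ideal.span (Set.range f.coeff) with hI
  have hann : ∀ c : R, (∀ y ∈ I, c * y = 0) → c = 0 := by
    intro c hc
    have h1 : Polynomial.C c * f = 0 := by
      ext n
      rw [coeff_C_mul, coeff_zero]
      exact hc _ (Ideal.subset_span ⟨n, rfl⟩)
    have h2 := (mem_nonZeroDivisors_iff.mp hreg).2 (C c) h1
    exact Polynomial.C_eq_zero.mp h2
  have hannpow : ∀ (n : ℕ) (c : R), (∀ y ∈ I ^ n, c * y = 0) → c = 0 := by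
    intro n
    induction n with
    | zero =>
      intro c hc
      simpa using hc 1 (by simp)
    | succ j ih =>
      intro c hc
      apply hann
      intro y hy
      apply ih
      intro z hz
      have hm : y * z ∈ I ^ (j + 1) := by
        rw [pow_succ]
        exact mul_comm z y ▸ Ideal.mul_mem_mul hz hy
      rw [mul_assoc]
      exact hc _ hm
  have hcoeff : ∀ p : Ideal R, p.IsPrime → Infinite (R ⧸ p) → I ≤ p := by
    intro p hp hinf
    rw [hI, Ideal.span_le]
    rintro _ ⟨i, rfl⟩
    have hmap : f.map (Ideal.Quotient.mk p) = 0 := by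
      apply Polynomial.funext
      intro x
      obtain ⟨r, rfl⟩ := Ideal.Quotient.mk_surjective x
      rw [eval_zero, Polynomial.eval_map, Polynomial.eval₂_at_apply, hf0, map_zero]
    have h3 := congrArg (fun g : (R ⧸ p)[X] => g.coeff i) hmap
    simpa [Polynomial.coeff_map, Ideal.Quotient.eq_zero_iff_mem] using h3
  obtain ⟨k, hk⟩ := IsNoetherianRing.isNilpotent_nilradical R
  set S : Set (Ideal R) := {p | p ∈ minimalPrimes R ∧ Finite (R ⧸ p)} with hS
  set Q : Ideal R := sInf S with hQ
  have hQI : Q * I ≤ nilradical R := by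
    have hnil : nilradical R = sInf (minimalPrimes R) := by
      simp [nilradical, minimalPrimes, Ideal.sInf_minimalPrimes, Ideal.zero_eq_bot]
    rw [hnil]
    apply le_sInf
    intro p hp
    haveI hprime : p.IsPrime := hp.1.1
    by_cases hfin : Finite (R ⧸ p)
    · exact le_trans Ideal.mul_le_left (sInf_le ⟨hp, hfin⟩)
    · exact le_trans Ideal.mul_le_right (hcoeff p hprime (not_finite_iff_infinite.mp hfin))
  have hQkIk : Q ^ k * I ^ k ≤ ⊥ := by
    rw [← mul_pow]
    calc (Q * I) ^ k ≤ nilradical R ^ k := Ideal.pow_right_mono hQI k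
    _ = ⊥ := by rw [hk]; rfl
  have hQbot : Q ^ k = ⊥ := by
    rw [eq_bot_iff]
    intro q hq
    rw [Submodule.mem_bot]
    apply hannpow k q
    intro y hy
    have := hQkIk (Ideal.mul_mem_mul hq hy)
    rwa [Submodule.mem_bot] at this
  -- R ⧸ Q is finite
  have hSfin : S.Finite := (minimalPrimes.finite_of_isNoetherianRing R).subset fun p hp => hp.1
  haveI : Finite ↥S := hSfin
  haveI : ∀ p : S, Finite (R ⧸ (p.1 : Ideal R)) := fun p => p.2.2
  let g : R ⧸ Q →+* Π p : S, R ⧸ (p.1 : Ideal R) :=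
    Ideal.Quotient.lift Q (Pi.ringHom fun p => Ideal.Quotient.mk p.1) (by
      intro a ha
      ext p
      exact Ideal.Quotient.eq_zero_iff_mem.mpr (sInf_le p.2 ha))
  have hg : Function.Injective g := by
    rw [injective_iff_map_eq_zero]
    intro x hx
    obtain ⟨a, rfl⟩ := Ideal.Quotient.mk_surjective x
    rw [Ideal.Quotient.eq_zero_iff_mem]
    apply Submodule.mem_sInf.mpr
    intro p hp
    have h4 := congrFun hx ⟨p, hp⟩
    exact Ideal.Quotient.eq_zero_iff_mem.mp h4
  haveI hQfin : Finite (R ⧸ Q) := Finite.of_injective g hg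
  haveI : Finite (R ⧸ Q ^ k) := finite_quot_pow Q hQfin k
  haveI : Finite (R ⧸ (⊥ : Ideal R)) :=
    Finite.of_equiv _ (Ideal.quotEquivOfEq hQbot).toEquiv
  refine Finite.of_injective (Ideal.Quotient.mk (⊥ : Ideal R)) ?_
  intro a b h
  have : a - b ∈ (⊥ : Ideal R) := Ideal.Quotient.eq.mp h
  rwa [Submodule.mem_bot, sub_eq_zero] at this

/-- The ideal of polynomials in `R[X]` mapping every element of `S` into the ideal `I`. -/
def zeroFunctionsInto {R : Type*} [CommRing R] (S : Set R) (I : Ideal R) : Ideal R[X] where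
  carrier := {f | ∀ s ∈ S, f.eval s ∈ I}
  add_mem' := fun hf hg s hs => by simpa using I.add_mem (hf s hs) (hg s hs)
  zero_mem' := fun s _ => by simp
  smul_mem' := fun c f hf s hs => by simpa using I.mul_mem_left (c.eval s) (hf s hs)

/-- The ideal of polynomials vanishing on the subset `S`. -/
def zeroFunctions {R : Type*} [CommRing R] (S : Set R) : Ideal R[X] :=
  zeroFunctionsInto S ⊥

theorem statement_13 {R : Type*} [CommRing R] [IsNoetherianRing R] [IsLocalRing R] :
    (∃ f ∈ zeroFunctions (Set.univ : Set R), f ∈ nonZeroDivisors R[X]) ↔ Finite R := by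
  constructor
  · rintro ⟨f, hfZ, hreg⟩
    have hf0 : ∀ r : R, f.eval r = 0 := by
      intro r
      have h := hfZ r (Set.mem_univ r)
      rwa [Ideal.mem_bot] at h
    exact finite_of_regular_vanishing f hf0 hreg
  · intro hfin
    haveI := hfin
    haveI := Fintype.ofFinite R
    refine ⟨∏ r : R, (X - C r), ?_, ?_⟩
    · intro s _
      rw [Ideal.mem_bot, eval_prod]
      exact Finset.prod_eq_zero (Finset.mem_univ s) (by rw [eval_sub, eval_X, eval_C, sub_self])
    · exact (monic_prod_of_monic _ _ fun r _ => monic_X_sub_C r).mem_nonZeroDivisors
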